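/- Let V(y) = Σ_{k=−m}^{M} a_k y^k be a Laurent polynomial with real coefficients a_k ≥ 0, where m ≥ 1, M ≥ 1, a_{−m} > 0 and a_M > 0, and let τ > 0 be the unique positive real number with V′(τ) = 0. Then (y − τ)² divides the real polynomial y^m (V(y) − V(τ)) ∈ ℝ[y], and the quotient polynomial Q(y), defined by Q(y)·(y − τ)² = y^m (V(y) − V(τ)), has all its coefficients (from degree 0 up to degree m + M − 2) strictly positive. -/

import Mathlib

open Polynomial Finset

noncomputable def Haux (τ : ℝ) (n : ℕ) : ℝ[X] :=
  ∑ i ∈ Finset.range (n-1), C (((n-1-i : ℕ) : ℝ) * τ^(n-2-i)) * X ^ i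

noncomputable def Haux' (τ : ℝ) (n : ℕ) : ℝ[X] :=
  ∑ i ∈ Finset.range (n-1), C (((i+1 : ℕ) : ℝ) * τ^(n-2-i)) * X ^ i

lemma Haux_coeff (τ : ℝ) (n t : ℕ) :
    (Haux τ n).coeff t = if t < n-1 then ((n-1-t : ℕ) : ℝ) * τ^(n-2-t) else 0 := by
  rw [Haux, finset_sum_coeff]
  simp only [coeff_C_mul, coeff_X_pow, mul_ite, mul_one, mul_zero]
  rw [Finset.sum_ite_eq (Finset.range (n-1)) t]
  simp

lemma Haux'_coeff (τ : ℝ) (n t : ℕ) :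
    (Haux' τ n).coeff t = if t < n-1 then ((t+1 : ℕ) : ℝ) * τ^(n-2-t) else 0 := by
  rw [Haux', finset_sum_coeff]
  simp only [coeff_C_mul, coeff_X_pow, mul_ite, mul_one, mul_zero]
  rw [Finset.sum_ite_eq (Finset.range (n-1)) t]
  simp

lemma Haux_rec (τ : ℝ) (q : ℕ) :
    Haux τ (q+2) = X * Haux τ (q+1) + C (((q+1 : ℕ) : ℝ) * τ^q) := by
  rw [Haux, Haux]
  rw [show q+2-1 = q+1 from rfl, show q+1-1 = q from rfl, Finset.sum_range_succ',
    Finset.mul_sum]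
  congr 1
  · apply Finset.sum_congr rfl
    intro i hi
    have h1 : q + 1 - (i+1) = q - i := by omega
    have h2 : q + 2 - 2 - (i+1) = q + 1 - 2 - i := by omega
    rw [h1, h2]; ring
  · simp

lemma Haux'_rec (τ : ℝ) (q : ℕ) :
    Haux' τ (q+2) = C τ * Haux' τ (q+1) + C (((q+1 : ℕ) : ℝ)) * X^q := by
  rw [Haux', Haux']
  rw [show q+2-1 = q+1 from rfl, show q+1-1 = q from rfl, Finset.sum_range_succ,
    Finset.mul_sum]
  congr 1
  · apply Finset.sum_congr rfl
    intro i hi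
    simp only [Finset.mem_range] at hi
    have h2 : q + 2 - 2 - i = (q + 1 - 2 - i) + 1 := by omega
    rw [h2, pow_succ, ← mul_assoc, map_mul]
    ring
  · have : q + 2 - 2 - q = 0 := by omega
    rw [this]
    simp

lemma lemA (τ : ℝ) (n : ℕ) : (X:ℝ[X])^n - C (τ^n) =
    C ((n:ℝ) * τ^(n-1)) * (X - C τ) + (X - C τ)^2 * Haux τ n := by
  induction n with
  | zero => simp [Haux]
  | succ p ih =>
    match p, ih with
    | 0, _ => simp [Haux]
    | q+1, ih =>
      rw [Haux_rec]
      simp only [Nat.add_sub_cancel, map_mul, map_add, map_pow, map_natCast] at *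
      push_cast at *
      linear_combination (X:ℝ[X]) * ih

lemma lemB (τ : ℝ) (n : ℕ) : (X:ℝ[X])^n - C (τ^n) =
    C ((n:ℝ)) * X^(n-1) * (X - C τ) - (X - C τ)^2 * Haux' τ n := by
  induction n with
  | zero => simp [Haux']
  | succ p ih =>
    match p, ih with
    | 0, _ => simp [Haux']
    | q+1, ih =>
      rw [Haux'_rec]
      simp only [Nat.add_sub_cancel, map_mul, map_add, map_pow, map_natCast] at *
      push_cast at *
      linear_combination (C τ : ℝ[X]) * ih

lemma lemPos (τ : ℝ) (n m : ℕ) : (X:ℝ[X])^(n+m) - C (τ^n) * X^m =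
    C ((n:ℝ) * τ^(n-1)) * (X - C τ) * X^m + (X - C τ)^2 * (X^m * Haux τ n) := by
  linear_combination (X:ℝ[X])^m * lemA τ n

lemma lemNeg (τ : ℝ) (hτ : τ ≠ 0) (n j : ℕ) (hj : 1 ≤ j) :
    (X:ℝ[X])^n - C ((τ^j)⁻¹) * X^(n+j) =
      C (-(j:ℝ) * (τ^j)⁻¹) * (X - C τ) * X^(n+j-1)
        + (X - C τ)^2 * (C ((τ^j)⁻¹) * X^n * Haux' τ j) := by
  obtain ⟨i, rfl⟩ : ∃ i, j = i + 1 := ⟨j - 1, by omega⟩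
  have ht' : C ((τ^(i+1):ℝ)⁻¹) * C (τ^(i+1)) = (1:ℝ[X]) := by
    rw [← map_mul, inv_mul_cancel₀ (pow_ne_zero _ hτ), map_one]
  have hb := lemB τ (i+1)
  rw [show n+(i+1)-1 = n+i from rfl]
  simp only [Nat.add_sub_cancel, map_mul, map_neg, map_natCast] at *
  push_cast at *
  linear_combination (-(C ((τ^(i+1):ℝ)⁻¹) * (X:ℝ[X])^n)) * hb - (X:ℝ[X])^n * ht'

lemma Haux_coeff_nonneg {τ : ℝ} (hτ : 0 ≤ τ) (n t : ℕ) : 0 ≤ (Haux τ n).coeff t := by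
  rw [Haux_coeff]; split
  · positivity
  · exact le_refl 0

lemma Haux'_coeff_nonneg {τ : ℝ} (hτ : 0 ≤ τ) (n t : ℕ) : 0 ≤ (Haux' τ n).coeff t := by
  rw [Haux'_coeff]; split
  · positivity
  · exact le_refl 0

lemma Haux_coeff_pos {τ : ℝ} (hτ : 0 < τ) {n t : ℕ} (h : t < n - 1) :
    0 < (Haux τ n).coeff t := by
  rw [Haux_coeff, if_pos h]
  have : 1 ≤ n - 1 - t := by omega
  have h1 : (0:ℝ) < ((n - 1 - t : ℕ) : ℝ) := by exact_mod_cast Nat.lt_of_lt_of_le Nat.zero_lt_one this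
  positivity

lemma Haux'_coeff_pos {τ : ℝ} (hτ : 0 < τ) {n t : ℕ} (h : t < n - 1) :
    0 < (Haux' τ n).coeff t := by
  rw [Haux'_coeff, if_pos h]
  have h1 : (0:ℝ) < ((t + 1 : ℕ) : ℝ) := by positivity
  positivity

open Polynomial in
/-- Let `V(y) = Σ_{k=−m}^{M} a_k y^k` be a Laurent polynomial with nonnegative real
coefficients, `m, M ≥ 1`, `a_{−m} > 0`, `a_M > 0`, and let `τ > 0` be the critical point,
`V′(τ) = 0`. Then `(y − τ)²` divides the polynomial `y^m (V(y) − V(τ))`, and the quotient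
`Q` has strictly positive coefficients in all degrees `0, …, m + M − 2`. -/
theorem quotient_poly_pos_coeffs (m M : ℕ) (hm : 1 ≤ m) (hM : 1 ≤ M) (a : ℤ → ℝ)
    (ha : ∀ k, 0 ≤ a k) (ham : 0 < a (-(m : ℤ))) (haM : 0 < a (M : ℤ))
    (V : ℝ → ℝ) (hV : V = fun y => ∑ k ∈ Finset.Icc (-(m : ℤ)) (M : ℤ), a k * y ^ k)
    (τ : ℝ) (hτ : 0 < τ) (hcrit : deriv V τ = 0)
    (P : ℝ[X])
    (hP : P = (∑ k ∈ Finset.Icc (-(m : ℤ)) (M : ℤ), C (a k) * X ^ (k + (m : ℤ)).toNat)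
        - C (V τ) * X ^ m) :
    ∃ Q : ℝ[X], P = (X - C τ) ^ 2 * Q ∧ ∀ j : ℕ, j ≤ m + M - 2 → 0 < Q.coeff j := by
  set S := Finset.Icc (-(m:ℤ)) (M:ℤ) with hS
  -- the derivative condition
  have hderiv : HasDerivAt V (∑ k ∈ S, a k * ((k:ℝ) * τ ^ (k-1))) τ := by
    rw [hV]
    exact HasDerivAt.fun_sum (fun k _ => (hasDerivAt_zpow k τ (Or.inl hτ.ne')).const_mul (a k))
  have hsum : ∑ k ∈ S, a k * ((k:ℝ) * τ ^ (k-1)) = 0 := by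
    rw [← hderiv.deriv]; exact hcrit
  set g : ℤ → ℝ := fun k => a k * ((k:ℝ) * τ ^ (k-1)) with hg
  set c : ℝ := ∑ k ∈ S, if 0 ≤ k then g k else 0 with hc
  have hd : ∑ k ∈ S, (if 0 ≤ k then 0 else g k) = -c := by
    have h0 : c + ∑ k ∈ S, (if 0 ≤ k then 0 else g k) = 0 := by
      rw [hc, ← Finset.sum_add_distrib]
      have e : ∀ k ∈ S, ((if 0 ≤ k then g k else 0) + if 0 ≤ k then 0 else g k) = g k := by
        intro k _; split <;> simp
      rw [Finset.sum_congr rfl e]; exact hsum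
    linarith
  set W : ℤ → ℝ[X] := fun k => if 0 ≤ k then X^m * Haux τ k.toNat
      else C (τ^(k:ℤ)) * X^((k+(m:ℤ)).toNat) * Haux' τ (-k).toNat with hW
  -- per-term identity
  have hterm : ∀ k ∈ S, (X:ℝ[X])^((k+(m:ℤ)).toNat) - C (τ^(k:ℤ)) * X^m =
      C ((k:ℝ) * τ^((k:ℤ)-1)) * (X - C τ) * (if 0 ≤ k then X^m else C τ * X^(m-1)) +
      (X - C τ)^2 * W k := by
    intro k hk
    rw [hS, Finset.mem_Icc] at hk
    by_cases h0 : 0 ≤ k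
    · rw [if_pos h0, hW]; simp only [if_pos h0]
      set n := k.toNat with hn
      have hk' : (k:ℤ) = (n:ℤ) := (Int.toNat_of_nonneg h0).symm
      have h1 : ((k + (m:ℤ)).toNat) = n + m := by omega
      have h2 : τ^(k:ℤ) = τ^n := by rw [hk', zpow_natCast]
      have h3 : (k:ℝ) * τ^((k:ℤ)-1) = (n:ℝ) * τ^(n-1) := by
        rcases Nat.eq_zero_or_pos n with h|h
        · have hk0 : k = 0 := by omega
          simp [hk0, h]
        · have he : (k:ℤ) - 1 = ((n-1 : ℕ) : ℤ) := by omega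
          have hcast : (k:ℝ) = (n:ℝ) := by exact_mod_cast hk'
          rw [he, zpow_natCast, hcast]
      rw [h1, h2, h3]
      exact lemPos τ n m
    · push_neg at h0
      rw [if_neg (not_le.mpr h0), hW]; simp only [if_neg (not_le.mpr h0)]
      set j := (-k).toNat with hj'
      set n := (k + (m:ℤ)).toNat with hn'
      have hj1 : 1 ≤ j := by omega
      have hmnj : m = n + j := by omega
      have hkj : (k:ℤ) = -(j:ℤ) := by omega
      have h2 : τ^(k:ℤ) = (τ^j)⁻¹ := by rw [hkj, zpow_neg, zpow_natCast]
      have h3 : (k:ℝ) * τ^((k:ℤ)-1) = -(j:ℝ) * (τ^j)⁻¹ * τ⁻¹ := by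
        rw [zpow_sub_one₀ hτ.ne', h2]
        have hcast : (k:ℝ) = -(j:ℝ) := by exact_mod_cast congrArg (fun z : ℤ => (z:ℝ)) hkj
        rw [hcast]; ring
      rw [h2, h3, hmnj]
      have hln := lemNeg τ hτ.ne' n j hj1
      have hmul : (-(j:ℝ) * (τ^j)⁻¹ * τ⁻¹) * τ = -(j:ℝ) * (τ^j)⁻¹ := by
        field_simp
      have hmulC : C (-(j:ℝ) * (τ^j)⁻¹ * τ⁻¹) * C τ = C (-(j:ℝ) * (τ^j)⁻¹) := by
        rw [← map_mul, hmul]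
      linear_combination hln - (X - C τ) * (X:ℝ[X])^(n+j-1) * hmulC
  -- rewrite P
  have hVτ : V τ = ∑ k ∈ S, a k * τ ^ (k:ℤ) := by rw [hV]
  have hP2 : P = ∑ k ∈ S, C (a k) * ((X:ℝ[X])^((k+(m:ℤ)).toNat) - C (τ^(k:ℤ)) * X^m) := by
    rw [hP, hVτ, map_sum, Finset.sum_mul, ← Finset.sum_sub_distrib]
    apply Finset.sum_congr rfl
    intro k _
    rw [map_mul]
    ring
  have hsplit : P = (X - C τ) * (∑ k ∈ S, C (g k) * (if 0 ≤ k then X^m else C τ * X^(m-1)))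
      + (X - C τ)^2 * (∑ k ∈ S, C (a k) * W k) := by
    rw [hP2, Finset.mul_sum, Finset.mul_sum, ← Finset.sum_add_distrib]
    apply Finset.sum_congr rfl
    intro k hk
    rw [hterm k hk, hg]
    simp only [map_mul]
    ring
  have hE : (∑ k ∈ S, C (g k) * (if 0 ≤ k then (X:ℝ[X])^m else C τ * X^(m-1))) =
      C c * X^(m-1) * (X - C τ) := by
    have e1 : ∀ k ∈ S, C (g k) * (if 0 ≤ k then (X:ℝ[X])^m else C τ * X^(m-1)) =
        C (if 0 ≤ k then g k else 0) * X^m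
          + C (if 0 ≤ k then 0 else g k) * (C τ * X^(m-1)) := by
      intro k _; split <;> simp
    rw [Finset.sum_congr rfl e1, Finset.sum_add_distrib, ← Finset.sum_mul, ← Finset.sum_mul,
      ← map_sum, ← map_sum, ← hc, hd, map_neg]
    have hxm : (X:ℝ[X])^m = X^(m-1) * X := by
      rw [← pow_succ]; congr 1; omega
    rw [hxm]; ring
  refine ⟨C c * X^(m-1) + ∑ k ∈ S, C (a k) * W k, ?_, ?_⟩
  · rw [hsplit, hE]; ring
  · intro j hj
    rw [coeff_add, coeff_C_mul, coeff_X_pow, finset_sum_coeff]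
    simp only [coeff_C_mul]
    have hWnn : ∀ k : ℤ, ∀ t : ℕ, 0 ≤ (W k).coeff t := by
      intro k t
      rw [hW]
      by_cases h0 : 0 ≤ k
      · simp only [if_pos h0]
        rw [mul_comm ((X:ℝ[X])^m), coeff_mul_X_pow']
        split
        · exact Haux_coeff_nonneg hτ.le _ _
        · exact le_refl 0
      · simp only [if_neg h0]
        rw [mul_assoc, mul_comm ((X:ℝ[X])^((k+(m:ℤ)).toNat)), ← mul_assoc, mul_assoc,
          coeff_C_mul, coeff_mul_X_pow']
        apply mul_nonneg (zpow_nonneg hτ.le _)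
        split
        · exact Haux'_coeff_nonneg hτ.le _ _
        · exact le_refl 0
    have hnn : ∀ k ∈ S, 0 ≤ a k * (W k).coeff j := fun k _ => mul_nonneg (ha k) (hWnn k j)
    have hitenn : (0:ℝ) ≤ (if j = m - 1 then 1 else 0) := by split <;> norm_num
    have hcnn : 0 ≤ c := by
      rw [hc]
      apply Finset.sum_nonneg
      intro k _
      split
      · rename_i h0
        exact mul_nonneg (ha k) (mul_nonneg (by exact_mod_cast h0) (zpow_pos hτ _).le)
      · exact le_refl 0
    have hMS : (M:ℤ) ∈ S := by rw [hS, Finset.mem_Icc]; omega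
    have hmS : -(m:ℤ) ∈ S := by rw [hS, Finset.mem_Icc]; omega
    rcases lt_trichotomy j (m-1) with hlt | heq | hgt
    · -- j < m - 1 : use k = -m
      have hpos : 0 < a (-(m:ℤ)) * (W (-(m:ℤ))).coeff j := by
        apply mul_pos ham
        rw [hW]
        have h0 : ¬ (0:ℤ) ≤ -(m:ℤ) := by omega
        simp only [if_neg h0]
        have e1 : ((-(m:ℤ)) + (m:ℤ)).toNat = 0 := by omega
        have e2 : (-(-(m:ℤ))).toNat = m := by omega
        rw [e1, e2, pow_zero, mul_one, coeff_C_mul]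
        exact mul_pos (zpow_pos hτ _) (Haux'_coeff_pos hτ hlt)
      have : 0 < ∑ k ∈ S, a k * (W k).coeff j :=
        Finset.sum_pos' hnn ⟨-(m:ℤ), hmS, hpos⟩
      nlinarith [mul_nonneg hcnn hitenn]
    · -- j = m - 1 : use the c term
      have hcpos : 0 < c := by
        rw [hc]
        apply Finset.sum_pos'
        · intro k _
          split
          · rename_i h0
            exact mul_nonneg (ha k) (mul_nonneg (by exact_mod_cast h0) (zpow_pos hτ _).le)
          · exact le_refl 0
        · refine ⟨(M:ℤ), hMS, ?_⟩
          rw [if_pos (by omega : (0:ℤ) ≤ (M:ℤ))]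
          apply mul_pos haM
          apply mul_pos _ (zpow_pos hτ _)
          exact_mod_cast Nat.lt_of_lt_of_le Nat.zero_lt_one hM
      have hsnn : 0 ≤ ∑ k ∈ S, a k * (W k).coeff j := Finset.sum_nonneg hnn
      rw [if_pos heq]
      nlinarith
    · -- m - 1 < j : use k = M
      have hjm : m ≤ j := by omega
      have hpos : 0 < a (M:ℤ) * (W (M:ℤ)).coeff j := by
        apply mul_pos haM
        rw [hW]
        simp only [if_pos (by omega : (0:ℤ) ≤ (M:ℤ))]
        have e1 : ((M:ℤ)).toNat = M := by omega
        rw [e1, mul_comm ((X:ℝ[X])^m), coeff_mul_X_pow', if_pos hjm]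
        exact Haux_coeff_pos hτ (by omega)
      have : 0 < ∑ k ∈ S, a k * (W k).coeff j :=
        Finset.sum_pos' hnn ⟨(M:ℤ), hMS, hpos⟩
      nlinarith [mul_nonneg hcnn hitenn]
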